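/- Let G ∈ 𝒢_{2n} and let M_s be a perfect matching of G with f(G,M_s) = n−1. Then every perfect matching M of G can be transformed into M_s by a finite sequence of matching 2-switches; that is, there exist perfect matchings M = M_1, M_2, …, M_r = M_s of G such that for each 1 ≤ i ≤ r−1 there is an M_i-alternating 4-cycle C_i in G with M_{i+1} = M_i ⊕ E(C_i). -/

import Mathlib

open SimpleGraph

/-- `M` is a perfect matching of the simple graph `G`, viewed as a set of edges:
the edges of `M` are pairwise disjoint edges of `G` covering every vertex. -/
def IsPM {V : Type*} (G : SimpleGraph V) (M : Set (Sym2 V)) : Prop :=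
  M ⊆ G.edgeSet ∧
  (∀ e ∈ M, ∀ f ∈ M, e ≠ f → ∀ v : V, v ∈ e → v ∉ f) ∧
  (∀ v : V, ∃ e ∈ M, v ∈ e)

/-- `S` is a forcing set of the perfect matching `M` of `G`:
`S ⊆ M` and `M` is the unique perfect matching of `G` containing `S`. -/
def IsForcingSet {V : Type*} (G : SimpleGraph V) (M S : Set (Sym2 V)) : Prop :=
  S ⊆ M ∧ ∀ M', IsPM G M' → S ⊆ M' → M' = M

/-- The forcing number `f(G,M)`: smallest cardinality of a forcing set of `M`. -/
noncomputable def forcingNum {V : Type*} (G : SimpleGraph V) (M : Set (Sym2 V)) : ℕ :=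
  sInf {k | ∃ S, IsForcingSet G M S ∧ S.ncard = k}

/-- The minimum forcing number `f(G)`. -/
noncomputable def minForcing {V : Type*} (G : SimpleGraph V) : ℕ :=
  sInf {k | ∃ M, IsPM G M ∧ forcingNum G M = k}

/-- The maximum forcing number `F(G)`. -/
noncomputable def maxForcing {V : Type*} (G : SimpleGraph V) : ℕ :=
  sSup {k | ∃ M, IsPM G M ∧ forcingNum G M = k}

/-- Vertex connectivity `κ(G)`: least size of a set of vertices whose deletion
disconnects the graph or leaves at most one vertex. -/
noncomputable def vertexConn {V : Type*} (G : SimpleGraph V) : ℕ :=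
  sInf {k | ∃ X : Set V, X.ncard = k ∧ (¬ (G.induce Xᶜ).Connected ∨ Xᶜ.ncard ≤ 1)}

/-- Edge connectivity `λ(G)`: least size of a set of edges whose deletion
disconnects the graph. -/
noncomputable def edgeConn {V : Type*} (G : SimpleGraph V) : ℕ :=
  sInf {k | ∃ F : Set (Sym2 V), F ⊆ G.edgeSet ∧ F.ncard = k ∧ ¬ (G.deleteEdges F).Connected}

/-- `G` is `l`-extendable: `G` is connected, has at least `2l+2` vertices, has a
perfect matching, and every matching of size `l` extends to a perfect matching. -/
def IsExtendable {V : Type*} [Fintype V] (G : SimpleGraph V) (l : ℕ) : Prop :=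
  G.Connected ∧ 2 * l + 2 ≤ Fintype.card V ∧ (∃ M, IsPM G M) ∧
    ∀ N : Set (Sym2 V), N ⊆ G.edgeSet →
      (∀ e ∈ N, ∀ f ∈ N, e ≠ f → ∀ v : V, v ∈ e → v ∉ f) → N.ncard = l →
      ∃ M, IsPM G M ∧ N ⊆ M

/-- `G` is factor-critical: deleting any vertex leaves a graph with a perfect matching. -/
def IsFactorCritical {V : Type*} (G : SimpleGraph V) : Prop :=
  ∀ v : V, ∃ M, IsPM (G.induce {v}ᶜ) M

/-- `o(G)`: the number of connected components of odd order. -/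
noncomputable def oddComponents {V : Type*} (G : SimpleGraph V) : ℕ :=
  {c : G.ConnectedComponent | Odd c.supp.ncard}.ncard

/-- `G` belongs to `𝒦_{n,n}⁺`: it is obtained from `K_{n,n}` by adding edges inside one
partite set; equivalently there is an independent set `A` of size `n` all of whose
vertices are adjacent to all vertices outside `A`. -/
def InKnnPlus {V : Type*} (n : ℕ) (G : SimpleGraph V) : Prop :=
  ∃ A : Set V, A.ncard = n ∧ (∀ a ∈ A, ∀ b ∈ A, ¬ G.Adj a b) ∧
    ∀ a ∈ A, ∀ b ∉ A, G.Adj a b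

/-- `M` is a perfect matching of the subgraph of `G` induced by the vertex set `T`. -/
def IsPMOn {V : Type*} (G : SimpleGraph V) (T : Set V) (M : Set (Sym2 V)) : Prop :=
  M ⊆ G.edgeSet ∧ (∀ e ∈ M, ∀ w : V, w ∈ e → w ∈ T) ∧
  (∀ e ∈ M, ∀ f ∈ M, e ≠ f → ∀ v : V, v ∈ e → v ∉ f) ∧
  (∀ w ∈ T, ∃ e ∈ M, w ∈ e)

/-- The forcing number of the perfect matching `M` of the subgraph of `G`
induced by the vertex set `T`. -/
noncomputable def forcingNumOn {V : Type*} (G : SimpleGraph V) (T : Set V)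
    (M : Set (Sym2 V)) : ℕ :=
  sInf {k | ∃ S, S ⊆ M ∧ (∀ M', IsPMOn G T M' → S ⊆ M' → M' = M) ∧ S.ncard = k}

/-- `{i,j}` is one of the `k` special pairs `{2t, 2t+1}` (0-indexed), `t < k`. -/
def pairIdx (k : ℕ) {n : ℕ} (i j : Fin n) : Prop :=
  ∃ t, t < k ∧ ((i.val = 2 * t ∧ j.val = 2 * t + 1) ∨ (j.val = 2 * t ∧ i.val = 2 * t + 1))

/-- The graph `H_k` on vertices `u_0,…,u_{n-1}` (left copy) and `v_0,…,v_{n-1}`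
(right copy): edges `u_i v_i` for all `i`; `u_{2t} u_{2t+1}` and `v_{2t} v_{2t+1}`
for `t < k`; and `u_i v_j`, `u_j v_i` for every pair `i ≠ j` that is not one of the
`k` special pairs. -/
def Hgraph (n k : ℕ) : SimpleGraph (Fin n ⊕ Fin n) :=
  SimpleGraph.fromRel (fun x y =>
    match x, y with
    | Sum.inl i, Sum.inr j => i = j ∨ ¬ pairIdx k i j
    | Sum.inl i, Sum.inl j => pairIdx k i j
    | Sum.inr i, Sum.inr j => pairIdx k i j
    | Sum.inr _, Sum.inl _ => False)

/-- The perfect matching `M₀ = {u_i v_i : i}` of `H_k`. -/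
def M0 (n : ℕ) : Set (Sym2 (Fin n ⊕ Fin n)) :=
  {e | ∃ i : Fin n, e = s(Sum.inl i, Sum.inr i)}

section aux
variable {V : Type*} {G : SimpleGraph V} {M M' : Set (Sym2 V)}

lemma pm_unique_edge (hM : IsPM G M) {e f : Sym2 V} (he : e ∈ M) (hf : f ∈ M)
    {v : V} (hve : v ∈ e) (hvf : v ∈ f) : e = f := by
  by_contra hne
  exact hM.2.1 e he f hf hne v hve hvf

lemma pm_partner (hM : IsPM G M) :
    ∃ p : V → V, (∀ v, p v ≠ v) ∧ (∀ v, s(v, p v) ∈ M) ∧ (∀ v w, s(v, w) ∈ M → w = p v) := by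
  have h : ∀ v : V, ∃ w, w ≠ v ∧ s(v, w) ∈ M ∧ ∀ u, s(v, u) ∈ M → u = w := by
    intro v
    obtain ⟨e, heM, hve⟩ := hM.2.2 v
    obtain ⟨w, rfl⟩ : ∃ w, e = s(v, w) := ⟨Sym2.Mem.other hve, (Sym2.other_spec hve).symm⟩
    refine ⟨w, ?_, heM, ?_⟩
    · rintro rfl
      exact (G.not_isDiag_of_mem_edgeSet (hM.1 heM)) (Sym2.mk_isDiag_iff.mpr rfl)
    · intro u huM
      have := pm_unique_edge hM huM heM (Sym2.mem_mk_left v u) (Sym2.mem_mk_left v w)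
      exact Sym2.congr_right.mp this
  choose p h1 h2 h3 using h
  exact ⟨p, h1, h2, h3⟩

lemma pm_superset (hM : IsPM G M) (hM' : IsPM G M') (hsub : M ⊆ M') : M' = M := by
  ext e
  refine ⟨fun he' => ?_, fun he => hsub he⟩
  by_contra heM
  have hne : ¬ e.IsDiag := G.not_isDiag_of_mem_edgeSet (hM'.1 he')
  obtain ⟨x, y⟩ := e
  obtain ⟨f, hfM, hxf⟩ := hM.2.2 x
  have hfM' : f ∈ M' := hsub hfM
  have heq : s(x,y) = f := pm_unique_edge hM' he' hfM' (Sym2.mem_mk_left x y) hxf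
  rw [← heq] at hfM
  exact heM hfM

lemma pm_eq_of_diff_empty (hM : IsPM G M) (hM' : IsPM G M') (h : M' \ M = ∅) : M = M' := by
  have hsub : M' ⊆ M := by
    intro e he
    by_contra heM
    rw [Set.eq_empty_iff_forall_notMem] at h
    exact h e ⟨he, heM⟩
  exact pm_superset hM' hM hsub

end aux

section aux2
variable {V : Type*} {G : SimpleGraph V} {M : Set (Sym2 V)}

lemma pm_card [Fintype V] (hM : IsPM G M) : 2 * M.ncard = Fintype.card V := by
  classical
  obtain ⟨p, hp1, hp2, hp3⟩ := pm_partner hM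
  have hfin : M.Finite := Set.toFinite M
  have hcard : M.ncard = hfin.toFinset.card := Set.ncard_eq_toFinset_card M hfin
  have key : (Finset.univ : Finset V).card
      = ∑ e ∈ hfin.toFinset, (Finset.univ.filter (fun v => s(v, p v) = e)).card := by
    apply Finset.card_eq_sum_card_fiberwise
    intro v _
    rw [Finset.mem_coe, Set.Finite.mem_toFinset]
    exact hp2 v
  have fib : ∀ e ∈ hfin.toFinset, (Finset.univ.filter (fun v => s(v, p v) = e)).card = 2 := by
    intro e he
    have heM : e ∈ M := hfin.mem_toFinset.mp he
    have hdiag : ¬ e.IsDiag := G.not_isDiag_of_mem_edgeSet (hM.1 heM)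
    obtain ⟨x, y⟩ := e
    have heM' : s(x, y) ∈ M := heM
    have hxy : x ≠ y := by
      intro h; exact hdiag (Sym2.mk_isDiag_iff.mpr h)
    have hpx : p x = y := (hp3 x y heM').symm
    have hpy : p y = x := (hp3 y x (by rwa [Sym2.eq_swap] at heM')).symm
    have hset : Finset.univ.filter (fun v => s(v, p v) = s(x, y)) = {x, y} := by
      ext v
      simp only [Finset.mem_filter, Finset.mem_univ, true_and, Finset.mem_insert,
        Finset.mem_singleton]
      constructor
      · intro h
        have hv : v ∈ s(x, y) := by
          rw [← h]; exact Sym2.mem_mk_left v (p v)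
        exact Sym2.mem_iff.mp hv
      · rintro (rfl | rfl)
        · rw [hpx]
        · rw [hpy, Sym2.eq_swap]
      ---
    show (Finset.univ.filter (fun v => s(v, p v) = s(x, y))).card = 2
    rw [hset, Finset.card_insert_of_notMem (by simpa using hxy), Finset.card_singleton]
  rw [Finset.sum_congr rfl fib] at key
  rw [Finset.sum_const, smul_eq_mul] at key
  rw [hcard, ← Finset.card_univ, key, Nat.mul_comm]

lemma switch_pm (hM : IsPM G M) {a b c d : V}
    (hab : s(a,b) ∈ M) (hcd : s(c,d) ∈ M)
    (hbcE : s(b,c) ∈ G.edgeSet) (hdaE : s(d,a) ∈ G.edgeSet)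
    (hbcM : s(b,c) ∉ M) (hdaM : s(d,a) ∉ M)
    (hac : a ≠ c) (had : a ≠ d) (hbc : b ≠ c) (hbd : b ≠ d) :
    IsPM G ((M \ {s(a,b), s(c,d)}) ∪ {s(b,c), s(d,a)}) ∧
    symmDiff M {s(a,b), s(b,c), s(c,d), s(d,a)} = (M \ {s(a,b), s(c,d)}) ∪ {s(b,c), s(d,a)} := by
  have hab1 : a ≠ b := fun h =>
    (G.not_isDiag_of_mem_edgeSet (hM.1 hab)) (Sym2.mk_isDiag_iff.mpr h)
  have hcd1 : c ≠ d := fun h =>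
    (G.not_isDiag_of_mem_edgeSet (hM.1 hcd)) (Sym2.mk_isDiag_iff.mpr h)
  have hNotKept : ∀ e ∈ M, e ≠ s(a,b) → e ≠ s(c,d) →
      ∀ v ∈ e, v ≠ a ∧ v ≠ b ∧ v ≠ c ∧ v ≠ d := by
    intro e heM hne1 hne2 v hve
    refine ⟨?_, ?_, ?_, ?_⟩ <;> rintro rfl
    · exact hne1 (pm_unique_edge hM heM hab hve (Sym2.mem_mk_left v b))
    · exact hne1 (pm_unique_edge hM heM hab hve (Sym2.mem_mk_right a v))
    · exact hne2 (pm_unique_edge hM heM hcd hve (Sym2.mem_mk_left v d))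
    · exact hne2 (pm_unique_edge hM heM hcd hve (Sym2.mem_mk_right c v))
  constructor
  · refine ⟨?_, ?_, ?_⟩
    · rintro e (⟨heM, -⟩ | he)
      · exact hM.1 heM
      · rcases he with rfl | rfl
        · exact hbcE
        · exact hdaE
    · rintro e he f hf hne v hve hvf
      have hmem : ∀ x : V, ∀ u w : V, x ∈ s(u, w) → x = u ∨ x = w := fun x u w h =>
        Sym2.mem_iff.mp h
      rcases he with ⟨heM, hne1⟩ | he <;> rcases hf with ⟨hfM, hne2⟩ | hf
      · exact hM.2.1 e heM f hfM hne v hve hvf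
      · have hk := hNotKept e heM (fun h => hne1 (by simp [h])) (fun h => hne1 (by simp [h])) v hve
        rcases hf with rfl | rfl
        · rcases hmem v b c hvf with rfl | rfl
          · exact hk.2.1 rfl
          · exact hk.2.2.1 rfl
        · rcases hmem v d a hvf with rfl | rfl
          · exact hk.2.2.2 rfl
          · exact hk.1 rfl
      · have hk := hNotKept f hfM (fun h => hne2 (by simp [h])) (fun h => hne2 (by simp [h])) v hvf
        rcases he with rfl | rfl
        · rcases hmem v b c hve with rfl | rfl
          · exact hk.2.1 rfl
          · exact hk.2.2.1 rfl
        · rcases hmem v d a hve with rfl | rfl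
          · exact hk.2.2.2 rfl
          · exact hk.1 rfl
      · rcases he with rfl | rfl <;> rcases hf with rfl | rfl
        · exact hne rfl
        · rcases hmem v b c hve with rfl | rfl
          · rcases hmem v d a hvf with h | h
            · exact hbd h
            · exact hab1 h.symm
          · rcases hmem v d a hvf with h | h
            · exact hcd1 h
            · exact hac h.symm
        · rcases hmem v d a hve with rfl | rfl
          · rcases hmem v b c hvf with h | h
            · exact hbd h.symm
            · exact hcd1 h.symm
          · rcases hmem v b c hvf with h | h
            · exact hab1 h
            · exact hac h
        · exact hne rfl
    · intro v
      by_cases hva : v = a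
      · exact ⟨s(d,a), Or.inr (Or.inr rfl), hva ▸ Sym2.mem_mk_right d a⟩
      by_cases hvb : v = b
      · exact ⟨s(b,c), Or.inr (Or.inl rfl), hvb ▸ Sym2.mem_mk_left b c⟩
      by_cases hvc : v = c
      · exact ⟨s(b,c), Or.inr (Or.inl rfl), hvc ▸ Sym2.mem_mk_right b c⟩
      by_cases hvd : v = d
      · exact ⟨s(d,a), Or.inr (Or.inr rfl), hvd ▸ Sym2.mem_mk_left d a⟩
      obtain ⟨e, heM, hve⟩ := hM.2.2 v
      refine ⟨e, Or.inl ⟨heM, ?_⟩, hve⟩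
      rintro (rfl | rfl)
      · rcases Sym2.mem_iff.mp hve with rfl | rfl
        · exact hva rfl
        · exact hvb rfl
      · rcases Sym2.mem_iff.mp hve with rfl | rfl
        · exact hvc rfl
        · exact hvd rfl
  · rw [Set.symmDiff_def]
    ext x
    simp only [Set.mem_union, Set.mem_diff, Set.mem_insert_iff, Set.mem_singleton_iff]
    constructor
    · rintro (⟨hxM, hxT⟩ | ⟨hxT, hxM⟩)
      · exact Or.inl ⟨hxM, fun h => hxT (by tauto)⟩
      · rcases hxT with rfl | rfl | rfl | rfl
        · exact absurd hab hxM
        · exact Or.inr (Or.inl rfl)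
        · exact absurd hcd hxM
        · exact Or.inr (Or.inr rfl)
    · rintro (⟨hxM, hx2⟩ | hx)
      · refine Or.inl ⟨hxM, ?_⟩
        rintro (rfl | rfl | rfl | rfl)
        · exact hx2 (Or.inl rfl)
        · exact hbcM hxM
        · exact hx2 (Or.inr rfl)
        · exact hdaM hxM
      · rcases hx with rfl | rfl
        · exact Or.inr ⟨Or.inr (Or.inl rfl), hbcM⟩
        · exact Or.inr ⟨Or.inr (Or.inr (Or.inr rfl)), hdaM⟩

end aux2

section aux3
variable {V : Type*} {G : SimpleGraph V} {M Ms : Set (Sym2 V)}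

def Step (G : SimpleGraph V) (M M' : Set (Sym2 V)) : Prop :=
  ∃ a b c d : V,
    a ≠ b ∧ a ≠ c ∧ a ≠ d ∧ b ≠ c ∧ b ≠ d ∧ c ≠ d ∧
    G.Adj a b ∧ G.Adj b c ∧ G.Adj c d ∧ G.Adj d a ∧
    s(a, b) ∈ M ∧ s(c, d) ∈ M ∧ s(b, c) ∉ M ∧ s(d, a) ∉ M ∧
    M' = symmDiff M {s(a, b), s(b, c), s(c, d), s(d, a)}

def StepPM (G : SimpleGraph V) (M M' : Set (Sym2 V)) : Prop :=
  IsPM G M ∧ IsPM G M' ∧ Step G M M'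

lemma step_of (hM : IsPM G M) {a b c d : V}
    (hab : s(a,b) ∈ M) (hcd : s(c,d) ∈ M)
    (hbcE : s(b,c) ∈ G.edgeSet) (hdaE : s(d,a) ∈ G.edgeSet)
    (hbcM : s(b,c) ∉ M) (hdaM : s(d,a) ∉ M)
    (hac : a ≠ c) (had : a ≠ d) (hbc : b ≠ c) (hbd : b ≠ d) :
    StepPM G M ((M \ {s(a,b), s(c,d)}) ∪ {s(b,c), s(d,a)}) := by
  obtain ⟨hpm, heq⟩ := switch_pm hM hab hcd hbcE hdaE hbcM hdaM hac had hbc hbd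
  have hab1 : a ≠ b := fun h =>
    (G.not_isDiag_of_mem_edgeSet (hM.1 hab)) (Sym2.mk_isDiag_iff.mpr h)
  have hcd1 : c ≠ d := fun h =>
    (G.not_isDiag_of_mem_edgeSet (hM.1 hcd)) (Sym2.mk_isDiag_iff.mpr h)
  refine ⟨hM, hpm, a, b, c, d, hab1, hac, had, hbc, hbd, hcd1,
    (mem_edgeSet G).mp (hM.1 hab), (mem_edgeSet G).mp hbcE,
    (mem_edgeSet G).mp (hM.1 hcd), (mem_edgeSet G).mp hdaE,
    hab, hcd, hbcM, hdaM, heq.symm⟩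

lemma reach_to_seq (hMs : IsPM G Ms) (hM : IsPM G M)
    (h : Relation.ReflTransGen (StepPM G) M Ms) :
    ∃ (r : ℕ) (seq : Fin (r + 1) → Set (Sym2 V)), seq 0 = M ∧ seq (Fin.last r) = Ms ∧
      (∀ i, IsPM G (seq i)) ∧ ∀ i : Fin r, Step G (seq i.castSucc) (seq i.succ) := by
  induction h using Relation.ReflTransGen.head_induction_on with
  | refl =>
      exact ⟨0, fun _ => Ms, rfl, rfl, fun _ => hMs, fun i => i.elim0⟩
  | head hXY hYMs IH =>
      rename_i X Y
      obtain ⟨r, seq, h0, hl, hpm, hstep⟩ := IH hXY.2.1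
      refine ⟨r + 1, Fin.cases X seq, by simp, ?_, ?_, ?_⟩
      · have : Fin.last (r + 1) = (Fin.last r).succ := (Fin.succ_last r).symm
        rw [this]
        simp only [Fin.cases_succ]
        exact hl
      · intro i
        induction i using Fin.cases with
        | zero => simpa using hXY.1
        | succ j => simpa using hpm j
      · intro i
        induction i using Fin.cases with
        | zero =>
            have h1 : (Fin.castSucc (0 : Fin (r + 1))) = 0 := rfl
            rw [h1]
            simp only [Fin.cases_zero, Fin.cases_succ, h0]
            exact hXY.2.2
        | succ j =>
            have h1 : (j.succ).castSucc = (j.castSucc).succ := by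
              rw [Fin.succ_castSucc]
            rw [h1]
            simp only [Fin.cases_succ]
            exact hstep j
end aux3

section aux4
variable {V : Type*} {G : SimpleGraph V} {Ms : Set (Sym2 V)}

lemma propP [Fintype V] {n : ℕ} (hcard : Fintype.card V = 2 * n)
    (hMs : IsPM G Ms) (hfMs : forcingNum G Ms = n - 1) :
    ∀ x x' y y' : V, s(x, x') ∈ Ms → s(y, y') ∈ Ms → s(x, x') ≠ s(y, y') →
      (s(x, y) ∈ G.edgeSet ∧ s(x', y') ∈ G.edgeSet) ∨
      (s(x, y') ∈ G.edgeSet ∧ s(x', y) ∈ G.edgeSet) := by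
  intro x x' y y' he hf hne
  have hMsn : Ms.ncard = n := by
    have h2 := pm_card hMs
    rw [hcard] at h2
    omega
  have hxx' : x ≠ x' := fun h =>
    (G.not_isDiag_of_mem_edgeSet (hMs.1 he)) (Sym2.mk_isDiag_iff.mpr h)
  have hxf : x ∉ s(y, y') := hMs.2.1 _ he _ hf hne x (Sym2.mem_mk_left x x')
  have hx'f : x' ∉ s(y, y') := hMs.2.1 _ he _ hf hne x' (Sym2.mem_mk_right x x')
  have hn2 : 2 ≤ n := by
    have hsub : ({s(x,x'), s(y,y')} : Set (Sym2 V)) ⊆ Ms := by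
      rintro g (rfl | rfl); exacts [he, hf]
    have h2 : ({s(x,x'), s(y,y')} : Set (Sym2 V)).ncard = 2 := Set.ncard_pair hne
    have := Set.ncard_le_ncard hsub (Set.toFinite Ms)
    omega
  set S : Set (Sym2 V) := Ms \ {s(x,x'), s(y,y')} with hSdef
  have hSn : S.ncard = n - 2 := by
    have hsub : ({s(x,x'), s(y,y')} : Set (Sym2 V)) ⊆ Ms := by
      rintro g (rfl | rfl); exacts [he, hf]
    rw [hSdef, Set.ncard_diff hsub (Set.toFinite _), Set.ncard_pair hne, hMsn]
  have hnotF : ¬ IsForcingSet G Ms S := by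
    intro hF
    have hmem : (n - 2) ∈ {k | ∃ S', IsForcingSet G Ms S' ∧ S'.ncard = k} := ⟨S, hF, hSn⟩
    have hle := Nat.sInf_le hmem
    have : forcingNum G Ms ≤ n - 2 := hle
    rw [hfMs] at this
    omega
  have hSsub : S ⊆ Ms := Set.diff_subset
  have hM'ex : ∃ M', IsPM G M' ∧ S ⊆ M' ∧ M' ≠ Ms := by
    by_contra hcon
    push_neg at hcon
    exact hnotF ⟨hSsub, fun M' h1 h2 => hcon M' h1 h2⟩
  obtain ⟨M', hM', hSM', hneM'⟩ := hM'ex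
  have hgS : ∀ g ∈ Ms, g ≠ s(x,x') → g ≠ s(y,y') → g ∈ M' := fun g hg h1 h2 =>
    hSM' ⟨hg, by rintro (h | h) <;> [exact h1 h; exact h2 h]⟩
  have honeside : ∀ u u' w w' : V, s(u,u') ∈ Ms → s(w,w') ∈ Ms → s(u,u') ≠ s(w,w') →
      (∀ g ∈ Ms, g ≠ s(u,u') → g ≠ s(w,w') → g ∈ M') →
      s(u,u') ∈ M' → s(w,w') ∉ M' → False := by
    intro u u' w w' hu hw hnuw hU huM hwM
    obtain ⟨p', hp1, hp2, hp3⟩ := pm_partner hM'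
    have hwz : s(w, p' w) ∈ M' := hp2 w
    obtain ⟨g, hg, hzg⟩ := hMs.2.2 (p' w)
    have hzwz : p' w ∈ s(w, p' w) := Sym2.mem_mk_right w (p' w)
    by_cases hg1 : g = s(u,u')
    · have h1 : s(w, p' w) = g := pm_unique_edge hM' hwz (hg1 ▸ huM) hzwz hzg
      have hwg : w ∈ g := h1 ▸ Sym2.mem_mk_left w (p' w)
      have h2 : g = s(w, w') := pm_unique_edge hMs hg hw hwg (Sym2.mem_mk_left w w')
      exact hnuw (hg1 ▸ h2)
    by_cases hg2 : g = s(w,w')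
    · subst hg2
      rcases Sym2.mem_iff.mp hzg with h | h
      · exact (hp1 w) h
      · rw [h] at hwz
        exact hwM hwz
    · have hgM' : g ∈ M' := hU g hg hg1 hg2
      have h1 : s(w, p' w) = g := pm_unique_edge hM' hwz hgM' hzwz hzg
      have hwg : w ∈ g := h1 ▸ Sym2.mem_mk_left w (p' w)
      exact hg2 (pm_unique_edge hMs hg hw hwg (Sym2.mem_mk_left w w'))
  have hbothin : ¬ (s(x,x') ∈ M' ∧ s(y,y') ∈ M') := by
    rintro ⟨h1, h2⟩
    have hsub : Ms ⊆ M' := by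
      intro g hg
      by_cases hq1 : g = s(x,x')
      · exact hq1 ▸ h1
      by_cases hq2 : g = s(y,y')
      · exact hq2 ▸ h2
      · exact hgS g hg hq1 hq2
    exact hneM' (pm_superset hMs hM' hsub)
  have heM' : s(x,x') ∉ M' := by
    intro hcon
    have hfM' : s(y,y') ∉ M' := fun h => hbothin ⟨hcon, h⟩
    exact honeside x x' y y' he hf hne hgS hcon hfM'
  have hfM' : s(y,y') ∉ M' := by
    intro hcon
    exact honeside y y' x x' hf he hne.symm
      (fun g hg h1 h2 => hgS g hg h2 h1) hcon heM'
  have locate : ∀ u z : V, u ∈ s(x,x') → s(u,z) ∈ M' → z = y ∨ z = y' := by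
    intro u z hu huz
    have hnuz : u ≠ z := fun h =>
      (G.not_isDiag_of_mem_edgeSet (hM'.1 huz)) (Sym2.mk_isDiag_iff.mpr h)
    obtain ⟨g, hg, hzg⟩ := hMs.2.2 z
    have hz2 : z ∈ s(u, z) := Sym2.mem_mk_right u z
    by_cases hg1 : g = s(x,x')
    · exfalso
      subst hg1
      rcases Sym2.mem_iff.mp hzg with rfl | rfl <;> rcases Sym2.mem_iff.mp hu with rfl | rfl
      · exact hnuz rfl
      · rw [Sym2.eq_swap] at huz; exact heM' huz
      · exact heM' huz
      · exact hnuz rfl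
    by_cases hg2 : g = s(y,y')
    · subst hg2
      exact Sym2.mem_iff.mp hzg
    · exfalso
      have hgM' : g ∈ M' := hgS g hg hg1 hg2
      have h1 : s(u, z) = g := pm_unique_edge hM' huz hgM' hz2 hzg
      have hug : u ∈ g := h1 ▸ Sym2.mem_mk_left u z
      exact hg1 (pm_unique_edge hMs hg he hug hu)
  obtain ⟨p', hp1, hp2, hp3⟩ := pm_partner hM'
  have hxz : s(x, p' x) ∈ M' := hp2 x
  have hx'w : s(x', p' x') ∈ M' := hp2 x'
  rcases locate x (p' x) (Sym2.mem_mk_left x x') hxz with h1 | h1 <;>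
    rcases locate x' (p' x') (Sym2.mem_mk_right x x') hx'w with h2 | h2
  · exfalso
    rw [h1] at hxz; rw [h2] at hx'w
    have := pm_unique_edge hM' hxz hx'w (Sym2.mem_mk_right x y) (Sym2.mem_mk_right x' y)
    exact hxx' (Sym2.congr_left.mp this)
  · rw [h1] at hxz; rw [h2] at hx'w
    exact Or.inl ⟨hM'.1 hxz, hM'.1 hx'w⟩
  · rw [h1] at hxz; rw [h2] at hx'w
    exact Or.inr ⟨hM'.1 hxz, hM'.1 hx'w⟩
  · exfalso
    rw [h1] at hxz; rw [h2] at hx'w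
    have := pm_unique_edge hM' hxz hx'w (Sym2.mem_mk_right x y') (Sym2.mem_mk_right x' y')
    exact hxx' (Sym2.congr_left.mp this)
end aux4

section aux5
variable {V : Type*} {G : SimpleGraph V} {Ms M : Set (Sym2 V)}

lemma sym2_ne {a b c d : V} (h1 : a ≠ c) (h2 : a ≠ d) : s(a,b) ≠ s(c,d) := by
  intro h
  rcases Sym2.eq_iff.mp h with ⟨h3, -⟩ | ⟨h3, -⟩
  exacts [h1 h3, h2 h3]

lemma sym2_ne₂ {a b c d : V} (h1 : b ≠ c) (h2 : b ≠ d) : s(a,b) ≠ s(c,d) := by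
  intro h
  rcases Sym2.eq_iff.mp h with ⟨-, h3⟩ | ⟨-, h3⟩
  exacts [h2 h3, h1 h3]

lemma diff_lemma {Ms M : Set (Sym2 V)} {E1 E2 F1 F2 : Sym2 V}
    (h1 : E1 ∉ Ms) (h2 : E2 ∉ Ms) :
    Ms \ ((M \ {E1, E2}) ∪ {F1, F2}) ⊆ Ms \ M := by
  rintro g ⟨hg, hgn⟩
  refine ⟨hg, fun hgM => hgn (Or.inl ⟨hgM, ?_⟩)⟩
  rintro (rfl | rfl)
  exacts [h1 hg, h2 hg]

lemma strict_of_witness {A B : Set (Sym2 V)} (hsub : A ⊆ B) {w : Sym2 V}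
    (hwB : w ∈ B) (hwA : w ∉ A) : A ⊂ B :=
  Set.ssubset_def.mpr ⟨hsub, fun h => hwA (h hwB)⟩

lemma improve [Fintype V] (hMs : IsPM G Ms)
    (hP : ∀ x x' y y' : V, s(x,x') ∈ Ms → s(y,y') ∈ Ms → s(x,x') ≠ s(y,y') →
      (s(x,y) ∈ G.edgeSet ∧ s(x',y') ∈ G.edgeSet) ∨
      (s(x,y') ∈ G.edgeSet ∧ s(x',y) ∈ G.edgeSet))
    (hM : IsPM G M) {e1 : Sym2 V} (he1 : e1 ∈ Ms \ M) :
    ∃ M₂, Relation.ReflTransGen (StepPM G) M M₂ ∧ IsPM G M₂ ∧ Ms \ M₂ ⊂ Ms \ M := by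
  classical
  obtain ⟨pM, hpMne, hp2M, hp3M⟩ := pm_partner hM
  obtain ⟨pS, hpSne, hp2S, hp3S⟩ := pm_partner hMs
  have hinvM : ∀ v, pM (pM v) = v := fun v =>
    (hp3M (pM v) v (by rw [Sym2.eq_swap]; exact hp2M v)).symm
  have hinvS : ∀ v, pS (pS v) = v := fun v =>
    (hp3S (pS v) v (by rw [Sym2.eq_swap]; exact hp2S v)).symm
  have hnotM : ∀ u w : V, pM u ≠ w → s(u,w) ∉ M := fun u w hne h => hne ((hp3M u w h).symm)
  have hnotS : ∀ u w : V, pS u ≠ w → s(u,w) ∉ Ms := fun u w hne h => hne ((hp3S u w h).symm)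
  obtain ⟨a1, b1⟩ := e1
  obtain ⟨hE1Ms, hE1M⟩ := he1
  have hE1Ms : s(a1, b1) ∈ Ms := hE1Ms
  have hE1M : s(a1, b1) ∉ M := hE1M
  have hsa1 : pS a1 = b1 := (hp3S a1 b1 hE1Ms).symm
  have hsb1 : pS b1 = a1 := by rw [← hsa1, hinvS]
  -- vertices
  set a2 := pM b1 with ha2
  set b2 := pS a2 with hb2
  set b0 := pM a1 with hb0
  have hpa2 : pM a2 = b1 := by rw [ha2, hinvM]
  have hsb2 : pS b2 = a2 := by rw [hb2, hinvS]
  have hpb0 : pM b0 = a1 := by rw [hb0, hinvM]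
  -- basic distinctness
  have na1b1 : a1 ≠ b1 := fun h => hpSne a1 (by rw [hsa1, ← h])
  have na2b1 : a2 ≠ b1 := fun h => hpMne b1 (ha2 ▸ h)
  have na2a1 : a2 ≠ a1 := by
    intro h
    exact hE1M (by rw [Sym2.eq_swap]; rw [← h, ha2]; exact hp2M b1)
  have nb2a2 : b2 ≠ a2 := fun h => hpSne a2 (hb2 ▸ h)
  have nb2a1 : b2 ≠ a1 := by
    intro h
    have : pS a1 = a2 := by rw [← h, hsb2]
    rw [hsa1] at this
    exact na2b1 this.symm
  have nb2b1 : b2 ≠ b1 := by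
    intro h
    have : pS b1 = a2 := by rw [← h, hsb2]
    rw [hsb1] at this
    exact na2a1 this.symm
  have nb0a1 : b0 ≠ a1 := fun h => hpMne a1 (hb0 ▸ h)
  have nb0b1 : b0 ≠ b1 := by
    intro h
    exact hE1M (by rw [← h, hb0]; exact hp2M a1)
  have nb0a2 : b0 ≠ a2 := by
    intro h
    have : pM b0 = pM a2 := by rw [h]
    rw [hpb0, hpa2] at this
    exact na1b1 this
  -- edges in M
  have hMb1a2 : s(b1, a2) ∈ M := hp2M b1
  have hMa1b0 : s(a1, b0) ∈ M := hp2M a1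
  -- Ms edges
  have hE2Ms : s(a2, b2) ∈ Ms := hp2S a2
  have hE2M : s(a2, b2) ∉ M := hnotM a2 b2 (by rw [hpa2]; exact nb2b1.symm)
  -- one-switch finisher
  have onestep : ∀ (A B C D : V), s(A,B) ∈ M → s(C,D) ∈ M →
      s(B,C) ∈ G.edgeSet → s(D,A) ∈ G.edgeSet → s(B,C) ∉ M → s(D,A) ∉ M →
      A ≠ C → A ≠ D → B ≠ C → B ≠ D →
      s(A,B) ∉ Ms → s(C,D) ∉ Ms →
      ((s(B,C) ∈ Ms ∧ s(B,C) ∉ M) ∨ (s(D,A) ∈ Ms ∧ s(D,A) ∉ M)) →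
      ∃ M₂, Relation.ReflTransGen (StepPM G) M M₂ ∧ IsPM G M₂ ∧ Ms \ M₂ ⊂ Ms \ M := by
    intro A B C D h1 h2 h3 h4 h5 h6 d1 d2 d3 d4 n1 n2 hw
    have hstep := step_of hM h1 h2 h3 h4 h5 h6 d1 d2 d3 d4
    refine ⟨_, Relation.ReflTransGen.single hstep, hstep.2.1, ?_⟩
    have hsub := diff_lemma (M := M) (F1 := s(B,C)) (F2 := s(D,A)) n1 n2
    rcases hw with ⟨hw1, hw2⟩ | ⟨hw1, hw2⟩
    · exact strict_of_witness hsub ⟨hw1, hw2⟩ (fun hx => hx.2 (Or.inr (Or.inl rfl)))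
    · exact strict_of_witness hsub ⟨hw1, hw2⟩ (fun hx => hx.2 (Or.inr (Or.inr rfl)))
  have nMsb1a2 : s(b1,a2) ∉ Ms := hnotS b1 a2 (by rw [hsb1]; exact na2a1.symm)
  by_cases hm2 : pM b2 = a1
  · -- the alternating cycle has length 4 : switch on it directly
    have hMb2a1 : s(b2, a1) ∈ M := by rw [← hm2]; exact hp2M b2
    exact onestep b1 a2 b2 a1 hMb1a2 hMb2a1 (hMs.1 hE2Ms) (hMs.1 hE1Ms) hE2M hE1M
      nb2b1.symm na1b1.symm nb2a2.symm na2a1 nMsb1a2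
      (hnotS b2 a1 (by rw [hsb2]; exact na2a1))
      (Or.inr ⟨hE1Ms, hE1M⟩)
  · -- longer cycle: set up the window
    set a3 := pM b2 with ha3
    set b3 := pS a3 with hb3
    have hpa3 : pM a3 = b2 := by rw [ha3, hinvM]
    have hsb3 : pS b3 = a3 := by rw [hb3, hinvS]
    have na3a1 : a3 ≠ a1 := hm2
    have na3b2 : a3 ≠ b2 := fun h => hpMne b2 (by rw [← ha3, h])
    have na3a2 : a3 ≠ a2 := fun h => nb2b1 (by rw [← hpa3, h, hpa2])
    have na3b1 : a3 ≠ b1 := fun h => nb2a2 (by rw [← hpa3, h, ← ha2])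
    have nb3a3 : b3 ≠ a3 := fun h => hpSne a3 (by rw [← hb3, h])
    have nb3a1 : b3 ≠ a1 := fun h => na3b1 (by rw [← hsb3, h, hsa1])
    have nb3b1 : b3 ≠ b1 := fun h => na3a1 (by rw [← hsb3, h, hsb1])
    have nb3a2 : b3 ≠ a2 := fun h => na3b2 (by rw [← hsb3, h, ← hb2])
    have nb3b2 : b3 ≠ b2 := fun h => na3a2 (by rw [← hsb3, h, hsb2])
    have nb0a3 : b0 ≠ a3 := fun h => nb2a1 (by rw [← hpa3, ← h, hpb0])
    have hMb2a3 : s(b2, a3) ∈ M := by rw [ha3]; exact hp2M b2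
    have hE3Ms : s(a3, b3) ∈ Ms := by rw [hb3]; exact hp2S a3
    have hE3M : s(a3, b3) ∉ M := hnotM a3 b3 (by rw [hpa3]; exact nb3b2.symm)
    have nMsb2a3 : s(b2,a3) ∉ Ms := hnotS b2 a3 (by rw [hsb2]; exact na3a2.symm)
    by_cases hT1 : s(b1, a3) ∈ G.edgeSet
    · exact onestep b1 a2 b2 a3 hMb1a2 hMb2a3 (hMs.1 hE2Ms)
        (by rw [Sym2.eq_swap]; exact hT1) hE2M
        (hnotM a3 b1 (by rw [hpa3]; exact nb2b1))
        nb2b1.symm na3b1.symm nb2a2.symm na3a2.symm nMsb1a2 nMsb2a3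
        (Or.inl ⟨hE2Ms, hE2M⟩)
    set a4 := pM b3 with ha4
    set b4 := pS a4 with hb4
    have hpa4 : pM a4 = b3 := by rw [ha4, hinvM]
    have na4b3 : a4 ≠ b3 := fun h => hpMne b3 (by rw [← ha4, h])
    have na4b1 : a4 ≠ b1 := fun h => nb3a2 (by rw [← hpa4, h, ← ha2])
    have na4a2 : a4 ≠ a2 := fun h => nb3b1 (by rw [← hpa4, h, hpa2])
    have na4b2 : a4 ≠ b2 := fun h => nb3a3 (by rw [← hpa4, h, ← ha3])
    have na4a3 : a4 ≠ a3 := fun h => nb3b2 (by rw [← hpa4, h, hpa3])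
    have nb4b3 : b4 ≠ b3 := fun h => na4a3 (by rw [← hsb3, ← h, hb4, hinvS])
    have nb4b2 : b4 ≠ b2 := fun h => na4a2 (by rw [← hsb2, ← h, hb4, hinvS])
    have nb0a4 : b0 ≠ a4 := fun h => nb3a1 (by rw [← hpa4, ← h, hpb0])
    have hMb3a4 : s(b3, a4) ∈ M := by rw [ha4]; exact hp2M b3
    have hE4Ms : s(a4, b4) ∈ Ms := by rw [hb4]; exact hp2S a4
    have nMsb3a4 : s(b3,a4) ∉ Ms := hnotS b3 a4 (by rw [hsb3]; exact na4a3.symm)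
    by_cases hT2 : s(b2, a4) ∈ G.edgeSet
    · exact onestep b2 a3 b3 a4 hMb2a3 hMb3a4 (hMs.1 hE3Ms)
        (by rw [Sym2.eq_swap]; exact hT2) hE3M
        (hnotM a4 b2 (by rw [hpa4]; exact nb3b2))
        nb3b2.symm na4b2.symm nb3a3.symm na4a3.symm nMsb2a3 nMsb3a4
        (Or.inl ⟨hE3Ms, hE3M⟩)
    -- straight pairs at distance two
    have h13 := hP b1 a1 a3 b3 (by rw [Sym2.eq_swap]; exact hE1Ms) hE3Ms
      (sym2_ne na3b1.symm nb3b1.symm)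
    have hs13a : s(b1, b3) ∈ G.edgeSet := by
      rcases h13 with ⟨h, -⟩ | ⟨h, -⟩
      · exact absurd h hT1
      · exact h
    have h24 := hP b2 a2 a4 b4 (by rw [Sym2.eq_swap]; exact hE2Ms) hE4Ms
      (sym2_ne na4b2.symm nb4b2.symm)
    have hs24 : s(b2, b4) ∈ G.edgeSet ∧ s(a2, a4) ∈ G.edgeSet := by
      rcases h24 with ⟨h, -⟩ | h
      · exact absurd h hT2
      · exact h
    have hs24b : s(a2, a4) ∈ G.edgeSet := hs24.2
    -- first reshuffle switch (used in branches T3 and final)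
    have hstep1 : StepPM G M ((M \ {s(b1,a2), s(a4,b3)}) ∪ {s(a2,a4), s(b3,b1)}) :=
      step_of hM hMb1a2 (by rw [Sym2.eq_swap]; exact hMb3a4) hs24b
        (by rw [Sym2.eq_swap]; exact hs13a)
        (hnotM a2 a4 (by rw [hpa2]; exact na4b1.symm))
        (hnotM b3 b1 (by rw [← ha4]; exact na4b1))
        na4b1.symm nb3b1.symm na4a2.symm nb3a2.symm
    set M1 : Set (Sym2 V) := (M \ {s(b1,a2), s(a4,b3)}) ∪ {s(a2,a4), s(b3,b1)} with hM1
    have hsub1 : Ms \ M1 ⊆ Ms \ M :=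
      diff_lemma nMsb1a2 (by rw [Sym2.eq_swap]; exact nMsb3a4)
    have nMsb3b1 : s(b3,b1) ∉ Ms := hnotS b3 b1 (by rw [hsb3]; exact na3b1)
    by_cases hT3 : s(a1,a2) ∈ G.edgeSet ∧ s(b1,b2) ∈ G.edgeSet
    · -- second switch gaining e3
      have hstep2 : StepPM G M1
          ((M1 \ {s(b3,b1), s(b2,a3)}) ∪ {s(b1,b2), s(a3,b3)}) := by
        refine step_of hstep1.2.1 (Or.inr (Or.inr rfl))
          (Or.inl ⟨hMb2a3, ?_⟩) hT3.2 (hMs.1 hE3Ms) ?_ ?_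
          nb3b2 nb3a3 nb2b1.symm na3b1.symm
        · rintro (h | h)
          · exact (sym2_ne nb2b1 nb2a2) h
          · exact (sym2_ne na4b2.symm nb3b2.symm) h
        · rintro (⟨hm, -⟩ | h)
          · exact (hnotM b1 b2 (by rw [← ha2]; exact nb2a2.symm)) hm
          rcases h with h | h
          · exact (sym2_ne na2b1.symm na4b1.symm) h
          · exact (sym2_ne₂ nb3b2.symm nb2b1) h
        · rintro (⟨hm, -⟩ | h)
          · exact hE3M hm
          rcases h with h | h
          · exact (sym2_ne na3a2 na4a3.symm) h
          · exact (sym2_ne nb3a3.symm na3b1) h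
      refine ⟨_, Relation.ReflTransGen.head hstep1 (Relation.ReflTransGen.single hstep2),
        hstep2.2.1, ?_⟩
      have hsub2 : Ms \ ((M1 \ {s(b3,b1), s(b2,a3)}) ∪ {s(b1,b2), s(a3,b3)}) ⊆ Ms \ M1 :=
        diff_lemma nMsb3b1 nMsb2a3
      exact strict_of_witness (hsub2.trans hsub1) ⟨hE3Ms, hE3M⟩
        (fun hx => hx.2 (Or.inr (Or.inr rfl)))
    -- adjacent pair is crossed
    have hc1 : s(a1, b2) ∈ G.edgeSet := by
      rcases hP a1 b1 a2 b2 hE1Ms hE2Ms (sym2_ne na2a1.symm nb2a1.symm) with h | ⟨h, -⟩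
      · exact absurd h hT3
      · exact h
    by_cases hT4 : s(b0, a3) ∈ G.edgeSet
    · -- split-off switch then double gain
      have nb0b2 : b0 ≠ b2 := fun h => hm2 (by rw [ha3, ← h, hpb0])
      have hstepA : StepPM G M ((M \ {s(a1,b0), s(a3,b2)}) ∪ {s(b0,a3), s(b2,a1)}) :=
        step_of hM hMa1b0 (by rw [Sym2.eq_swap]; exact hMb2a3) hT4
          (by rw [Sym2.eq_swap]; exact hc1)
          (hnotM b0 a3 (by rw [hpb0]; exact na3a1.symm))
          (hnotM b2 a1 (by rw [← ha3]; exact na3a1))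
          na3a1.symm nb2a1.symm nb0a3 nb0b2
      have hstepB : StepPM G ((M \ {s(a1,b0), s(a3,b2)}) ∪ {s(b0,a3), s(b2,a1)})
          ((((M \ {s(a1,b0), s(a3,b2)}) ∪ {s(b0,a3), s(b2,a1)}) \ {s(b1,a2), s(b2,a1)})
            ∪ {s(a2,b2), s(a1,b1)}) := by
        refine step_of hstepA.2.1 (Or.inl ⟨hMb1a2, ?_⟩) (Or.inr (Or.inr rfl))
          (hMs.1 hE2Ms) (hMs.1 hE1Ms) ?_ ?_
          nb2b1.symm na1b1.symm nb2a2.symm na2a1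
        · rintro (h | h)
          · exact (sym2_ne na1b1.symm nb0b1.symm) h
          · exact (sym2_ne na3b1.symm nb2b1.symm) h
        · rintro (⟨hm, -⟩ | h)
          · exact hE2M hm
          rcases h with h | h
          · exact (sym2_ne nb0a2.symm na3a2.symm) h
          · exact (sym2_ne nb2a2.symm na2a1) h
        · rintro (⟨hm, -⟩ | h)
          · exact hE1M hm
          rcases h with h | h
          · exact (sym2_ne nb0a1.symm na3a1.symm) h
          · exact (sym2_ne₂ nb2b1.symm na1b1.symm) h
      refine ⟨_, Relation.ReflTransGen.head hstepA (Relation.ReflTransGen.single hstepB),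
        hstepB.2.1, ?_⟩
      have hsubA : Ms \ ((M \ {s(a1,b0), s(a3,b2)}) ∪ {s(b0,a3), s(b2,a1)}) ⊆ Ms \ M :=
        diff_lemma (hnotS a1 b0 (by rw [hsa1]; exact nb0b1.symm))
          (hnotS a3 b2 (by rw [← hb3]; exact nb3b2))
      have hsubB := diff_lemma (Ms := Ms)
        (M := (M \ {s(a1,b0), s(a3,b2)}) ∪ {s(b0,a3), s(b2,a1)})
        (F1 := s(a2,b2)) (F2 := s(a1,b1))
        nMsb1a2 (hnotS b2 a1 (by rw [hsb2]; exact na2a1))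
      exact strict_of_witness (hsubB.trans hsubA) ⟨hE1Ms, hE1M⟩
        (fun hx => hx.2 (Or.inr (Or.inr rfl)))
    -- final branch
    have na4a1 : a4 ≠ a1 := by
      intro h
      have hb41 : b4 = b1 := by rw [hb4, h, hsa1]
      refine hT3 ⟨?_, ?_⟩
      · rw [h] at hs24b
        rw [Sym2.eq_swap]; exact hs24b
      · have := hs24.1
        rw [hb41] at this
        rw [Sym2.eq_swap]; exact this
    have nb0b3 : b0 ≠ b3 := fun h => na4a1 (by rw [← hpb0, h, ← ha4])
    set a0 := pS b0 with ha0
    have hE0Ms : s(b0, a0) ∈ Ms := by rw [ha0]; exact hp2S b0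
    have hs03 : s(b0, b3) ∈ G.edgeSet := by
      rcases hP b0 a0 a3 b3 hE0Ms hE3Ms (sym2_ne nb0a3 nb0b3) with ⟨h, -⟩ | ⟨h, -⟩
      · exact absurd h hT4
      · exact h
    have hstepC : StepPM G M1
        ((M1 \ {s(b3,b1), s(a1,b0)}) ∪ {s(b1,a1), s(b0,b3)}) := by
      refine step_of hstep1.2.1 (Or.inr (Or.inr rfl)) (Or.inl ⟨hMa1b0, ?_⟩)
        (by rw [Sym2.eq_swap]; exact hMs.1 hE1Ms) hs03 ?_ ?_
        nb3a1 nb0b3.symm na1b1.symm nb0b1.symm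
      · rintro (h | h)
        · exact (sym2_ne na1b1 na2a1.symm) h
        · exact (sym2_ne na4a1.symm nb3a1.symm) h
      · rintro (⟨hm, -⟩ | h)
        · rw [Sym2.eq_swap] at hm
          exact hE1M hm
        rcases h with h | h
        · exact (sym2_ne na2b1.symm na4b1.symm) h
        · exact (sym2_ne₂ nb3a1.symm na1b1) h
      · rintro (⟨hm, -⟩ | h)
        · exact (hnotM b0 b3 (by rw [hpb0]; exact nb3a1.symm)) hm
        rcases h with h | h
        · exact (sym2_ne nb0a2 nb0a4) h
        · exact (sym2_ne nb0b3 nb0b1) h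
    refine ⟨_, Relation.ReflTransGen.head hstep1 (Relation.ReflTransGen.single hstepC),
      hstepC.2.1, ?_⟩
    have hsubC : Ms \ ((M1 \ {s(b3,b1), s(a1,b0)}) ∪ {s(b1,a1), s(b0,b3)}) ⊆ Ms \ M1 :=
      diff_lemma nMsb3b1 (hnotS a1 b0 (by rw [hsa1]; exact nb0b1.symm))
    exact strict_of_witness (hsubC.trans hsub1) ⟨hE1Ms, hE1M⟩
      (fun hx => hx.2 (Or.inr (Or.inl Sym2.eq_swap)))
end aux5

section main
variable {V : Type*} {G : SimpleGraph V}

lemma reach_main [Fintype V] {Ms : Set (Sym2 V)} (hMs : IsPM G Ms)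
    (hP : ∀ x x' y y' : V, s(x,x') ∈ Ms → s(y,y') ∈ Ms → s(x,x') ≠ s(y,y') →
      (s(x,y) ∈ G.edgeSet ∧ s(x',y') ∈ G.edgeSet) ∨
      (s(x,y') ∈ G.edgeSet ∧ s(x',y) ∈ G.edgeSet)) :
    ∀ k (M : Set (Sym2 V)), IsPM G M → (Ms \ M).ncard = k →
      Relation.ReflTransGen (StepPM G) M Ms := by
  intro k
  induction k using Nat.strong_induction_on with
  | _ k IH =>
    intro M hM hk
    by_cases hempty : Ms \ M = ∅
    · rw [pm_eq_of_diff_empty hM hMs hempty]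
    · obtain ⟨e1, he1⟩ := Set.nonempty_iff_ne_empty.mpr hempty
      obtain ⟨M₂, hreach, hM₂, hss⟩ := improve hMs hP hM he1
      have hlt : (Ms \ M₂).ncard < k := hk ▸ Set.ncard_lt_ncard hss (Set.toFinite _)
      exact hreach.trans (IH _ hlt M₂ hM₂ rfl)

end main

/-- main claim in the proof of Theorem 5.9. -/
theorem stmt19 {V : Type*} [Fintype V] (n : ℕ)
    (G : SimpleGraph V) (hcard : Fintype.card V = 2 * n)
    (Ms : Set (Sym2 V)) (hMs : IsPM G Ms) (hfMs : forcingNum G Ms = n - 1)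
    (M : Set (Sym2 V)) (hM : IsPM G M) :
    ∃ (r : ℕ) (seq : Fin (r + 1) → Set (Sym2 V)),
      seq 0 = M ∧ seq (Fin.last r) = Ms ∧ (∀ i, IsPM G (seq i)) ∧
      ∀ i : Fin r, ∃ a b c d : V,
        a ≠ b ∧ a ≠ c ∧ a ≠ d ∧ b ≠ c ∧ b ≠ d ∧ c ≠ d ∧
        G.Adj a b ∧ G.Adj b c ∧ G.Adj c d ∧ G.Adj d a ∧
        s(a, b) ∈ seq i.castSucc ∧ s(c, d) ∈ seq i.castSucc ∧
        s(b, c) ∉ seq i.castSucc ∧ s(d, a) ∉ seq i.castSucc ∧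
        seq i.succ = symmDiff (seq i.castSucc)
          {s(a, b), s(b, c), s(c, d), s(d, a)} := by
  classical
  have hP := propP hcard hMs hfMs
  have hreach := reach_main hMs hP (Ms \ M).ncard M hM rfl
  obtain ⟨r, seq, h0, hl, hpm, hstep⟩ := reach_to_seq hMs hM hreach
  exact ⟨r, seq, h0, hl, hpm, fun i => hstep i⟩
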